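/- Let $\tau$ be a metrizable totally bounded group topology on $\mathbb{Z}$, let $f:\mathbb{N}\to\mathbb{N}$ satisfy $\lim_{n\to\infty}(f(n+1)-f(n))=\infty$, and let $\varepsilon:\mathbb{N}\to[0,\infty)$ satisfy $\lim_{n\to\infty}\varepsilon(n)=\infty$. Then there exists a sequence $(a_n)$ of integers converging to $0$ in $\tau$ with $|a_n - f(n)| \le \varepsilon(n)$ for all $n$ and $\lim_{n\to\infty} a_n/f(n) = 1$. -/

import Mathlib

open Filter

theorem stmt2 (τ : TopologicalSpace ℤ) (hg : @IsTopologicalAddGroup ℤ τ _)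
    (hmet : @TopologicalSpace.MetrizableSpace ℤ τ)
    (htb : ∀ U ∈ @nhds ℤ τ 0, ∃ F : Finset ℤ, ∀ x : ℤ, ∃ y ∈ F, x - y ∈ U)
    (f : ℕ → ℕ) (hf : Tendsto (fun n => (f (n + 1) : ℤ) - f n) atTop atTop)
    (ε : ℕ → ℝ) (hε0 : ∀ n, 0 ≤ ε n) (hε : Tendsto ε atTop atTop) :
    ∃ a : ℕ → ℤ, Tendsto a atTop (@nhds ℤ τ 0) ∧
      (∀ n, |(a n : ℝ) - f n| ≤ ε n) ∧
      Tendsto (fun n => (a n : ℝ) / f n) atTop (nhds 1) := by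
  classical
  letI := τ
  haveI := hg
  haveI := hmet
  -- Step 1: f → ∞
  obtain ⟨N, hN⟩ := eventually_atTop.1 (hf.eventually_ge_atTop 1)
  have key : ∀ m : ℕ, (m : ℤ) ≤ f (N + m) := by
    intro m
    induction m with
    | zero => simpa using Int.natCast_nonneg (f (N + 0))
    | succ m ih =>
      have h1 := hN (N + m) (Nat.le_add_right _ _)
      have : N + m + 1 = N + (m + 1) := by omega
      rw [this] at h1
      push_cast at ih h1 ⊢
      omega
  have hfnat : Tendsto f atTop atTop := by
    refine tendsto_atTop.2 fun b => eventually_atTop.2 ⟨N + b, fun n hn => ?_⟩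
    have h1 := key (n - N)
    have h2 : N + (n - N) = n := by omega
    rw [h2] at h1
    omega
  have hfa : Tendsto (fun n => (f n : ℝ)) atTop atTop :=
    tendsto_natCast_atTop_atTop.comp hfnat
  -- Step 2: antitone basis of nhds 0
  obtain ⟨V, hV⟩ := (@nhds ℤ τ 0).exists_antitone_basis
  have hVmem : ∀ k, V k ∈ @nhds ℤ τ 0 := fun k => hV.toHasBasis.mem_of_mem trivial
  -- Step 3: density constants
  have key2 : ∀ k, ∃ C : ℕ, ∀ x : ℤ, ∃ u ∈ V k, |x - u| ≤ (C : ℤ) := by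
    intro k
    obtain ⟨F, hF⟩ := htb (V k) (hVmem k)
    refine ⟨F.sup Int.natAbs, fun x => ?_⟩
    obtain ⟨y, hyF, hy⟩ := hF x
    refine ⟨x - y, hy, ?_⟩
    have h1 : y.natAbs ≤ F.sup Int.natAbs := Finset.le_sup hyF
    have h2 : x - (x - y) = y := by ring
    rw [h2, Int.abs_eq_natAbs]
    exact_mod_cast h1
  choose C hC using key2
  -- Step 4: the scale d n
  set d : ℕ → ℝ := fun n => min (ε n) (Real.sqrt (f n)) with hd_def
  have hsq : Tendsto (fun n => Real.sqrt (f n)) atTop atTop := by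
    refine tendsto_atTop.2 fun b => ?_
    filter_upwards [hfa.eventually_ge_atTop (b ^ 2)] with n hn
    rcases le_or_gt b 0 with hb | hb
    · exact hb.trans (Real.sqrt_nonneg _)
    · calc b = Real.sqrt (b ^ 2) := (Real.sqrt_sq hb.le).symm
        _ ≤ Real.sqrt (f n) := Real.sqrt_le_sqrt hn
  have hd : Tendsto d atTop atTop := by
    refine tendsto_atTop.2 fun b => ?_
    filter_upwards [hε.eventually_ge_atTop b, hsq.eventually_ge_atTop b] with n h1 h2
    exact le_min h1 h2
  have hd0 : ∀ n, 0 ≤ d n := fun n => le_min (hε0 n) (Real.sqrt_nonneg _)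
  -- Step 5: diagonal index
  set K : ℕ → ℕ := fun n => Nat.findGreatest (fun k => (C k : ℝ) ≤ d n) n with hK_def
  have hKtend : Tendsto K atTop atTop := by
    refine tendsto_atTop.2 fun b => ?_
    filter_upwards [eventually_ge_atTop b, hd.eventually_ge_atTop (C b)] with n h1 h2
    exact Nat.le_findGreatest h1 h2
  have hKspec : ∀ n, 0 < K n → (C (K n) : ℝ) ≤ d n := by
    intro n hn
    rw [hK_def] at hn ⊢
    obtain ⟨m, _, hm1, hm2⟩ := Nat.findGreatest_pos.1 hn
    exact Nat.findGreatest_spec (P := fun k => (C k : ℝ) ≤ d n) hm1 hm2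
  -- Step 6: define a
  set a : ℕ → ℤ := fun n =>
    if h : 0 < K n then (hC (K n) (f n)).choose else (f n : ℤ) with ha_def
  have haV : ∀ n, 0 < K n → a n ∈ V (K n) := by
    intro n h
    have := (hC (K n) (f n)).choose_spec
    simp only [ha_def, dif_pos h]
    exact this.1
  have ha_pos : ∀ n, 0 < K n → a n = (hC (K n) (f n)).choose := by
    intro n h
    simp only [ha_def]
    rw [dif_pos h]
  have ha_neg : ∀ n, ¬ 0 < K n → a n = (f n : ℤ) := by
    intro n h
    simp only [ha_def]
    rw [dif_neg h]
  have hadist : ∀ n, |(a n : ℝ) - f n| ≤ d n := by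
    intro n
    by_cases h : 0 < K n
    · have hs := (hC (K n) (f n)).choose_spec.2
      rw [ha_pos n h]
      calc |((hC (K n) (f n)).choose : ℝ) - f n| = |((f n : ℤ) - (hC (K n) (f n)).choose : ℤ)| := by
            rw [abs_sub_comm]; push_cast; ring_nf
        _ ≤ (C (K n) : ℝ) := by exact_mod_cast hs
        _ ≤ d n := hKspec n h
    · rw [ha_neg n h]
      simpa using hd0 n
  refine ⟨a, ?_, ?_, ?_⟩
  · -- tendsto 0 in τ
    rw [hV.toHasBasis.tendsto_right_iff]
    intro i _
    filter_upwards [hKtend.eventually_ge_atTop (max i 1)] with n hn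
    have h1 : 0 < K n := lt_of_lt_of_le (by omega) hn
    exact hV.antitone (le_trans (le_max_left i 1) hn) (haV n h1)
  · intro n
    exact (hadist n).trans (min_le_left _ _)
  · -- ratio → 1
    have h0 : Tendsto (fun n => (a n : ℝ) / f n - 1) atTop (nhds 0) := by
      refine squeeze_zero_norm' ?_ ((tendsto_inv_atTop_zero).comp hsq)
      filter_upwards [hfa.eventually_ge_atTop 1] with n hn
      simp only [Function.comp]
      have hfpos : (0 : ℝ) < f n := lt_of_lt_of_le one_pos hn
      have h1 : (a n : ℝ) / f n - 1 = ((a n : ℝ) - f n) / f n := by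
        field_simp
      rw [Real.norm_eq_abs, h1, abs_div, abs_of_pos hfpos]
      calc |(a n : ℝ) - f n| / f n ≤ Real.sqrt (f n) / f n := by
            gcongr
            exact (hadist n).trans (min_le_right _ _)
        _ = (Real.sqrt (f n))⁻¹ := Real.sqrt_div_self
    have := h0.add_const 1
    simpa using this
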